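/- Let M₁ > 0, M₂ > 0 and R₀ > 0 be real constants, and let R: [0, ε_max) → (0, ∞) be a continuous, piecewise continuously differentiable function with R(0) = R₀ satisfying |R'(ε)| ≤ 4·M̄₁(ε)·R(ε) + 16·M̄₂(ε)·R(ε)², where M̄₁(ε) = M₁/(1 − 2εM₁) and M̄₂(ε) = M₂/(1 − 2εM₁)³, for all ε in the interval where 1 − 2εM₁ > 0. Then R(ε) ≥ R̄₋(ε) := R₀(1 − 2M₁ε)² / (1 + (8M₂R₀/M₁)·log(1/(1 − 2M₁ε))) for all ε with 0 ≤ ε < 1/(2M₁) in the domain, where R̄₋ is the solution of the ODE R̄₋' = −(4M̄₁ R̄₋ + 16M̄₂ R̄₋²) with R̄₋(0) = R₀. -/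

import Mathlib

/-- `M̄₁(ε) = M₁/(1 − 2εM₁)`. -/
noncomputable def Mbar₁ (M₁ ε : ℝ) : ℝ := M₁ / (1 - 2 * ε * M₁)

/-- `M̄₂(ε) = M₂/(1 − 2εM₁)³`. -/
noncomputable def Mbar₂ (M₁ M₂ ε : ℝ) : ℝ := M₂ / (1 - 2 * ε * M₁) ^ 3

/-- The lower comparison function
`R̄₋(ε) = R₀(1 − 2M₁ε)² / (1 + (8M₂R₀/M₁)·log(1/(1 − 2M₁ε)))`. -/
noncomputable def Rlow (M₁ M₂ R₀ ε : ℝ) : ℝ :=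
  R₀ * (1 - 2 * M₁ * ε) ^ 2 / (1 + (8 * M₂ * R₀ / M₁) * Real.log (1 / (1 - 2 * M₁ * ε)))

open Set in
/-- If `f` is continuous on `[a,b]` and has nonpositive derivative off a finite set,
then `f b ≤ f a`. -/
lemma le_start_of_deriv_nonpos_aux18 {s : Set ℝ} (hs : s.Finite) :
    ∀ (f f' : ℝ → ℝ) (a b : ℝ), a ≤ b → ContinuousOn f (Set.Icc a b) →
    (∀ x ∈ Set.Ioo a b, x ∉ s → HasDerivAt f (f' x) x) →
    (∀ x ∈ Set.Ioo a b, x ∉ s → f' x ≤ 0) → f b ≤ f a := by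
  refine Set.Finite.induction_on s hs ?_ ?_
  · intro f f' a b hab hc hd hle
    have hanti : AntitoneOn f (Set.Icc a b) := by
      apply antitoneOn_of_deriv_nonpos (convex_Icc a b) hc
      · intro x hx
        rw [interior_Icc] at hx
        exact ((hd x hx (Set.notMem_empty x)).differentiableAt).differentiableWithinAt
      · intro x hx
        rw [interior_Icc] at hx
        rw [(hd x hx (Set.notMem_empty x)).deriv]
        exact hle x hx (Set.notMem_empty x)
    exact hanti ⟨le_rfl, hab⟩ ⟨hab, le_rfl⟩ hab
  · intro c t hct htfin ih f f' a b hab hc hd hle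
    by_cases hcmem : c ∈ Set.Ioo a b
    · have h1 : f c ≤ f a := by
        refine ih f f' a c hcmem.1.le (hc.mono (Icc_subset_Icc le_rfl hcmem.2.le)) ?_ ?_
        · intro x hx hxt
          exact hd x ⟨hx.1, hx.2.trans hcmem.2⟩ (by
            simp only [Set.mem_insert_iff, not_or]
            exact ⟨ne_of_lt hx.2, hxt⟩)
        · intro x hx hxt
          exact hle x ⟨hx.1, hx.2.trans hcmem.2⟩ (by
            simp only [Set.mem_insert_iff, not_or]
            exact ⟨ne_of_lt hx.2, hxt⟩)
      have h2 : f b ≤ f c := by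
        refine ih f f' c b hcmem.2.le (hc.mono (Icc_subset_Icc hcmem.1.le le_rfl)) ?_ ?_
        · intro x hx hxt
          exact hd x ⟨hcmem.1.trans hx.1, hx.2⟩ (by
            simp only [Set.mem_insert_iff, not_or]
            exact ⟨(ne_of_lt hx.1).symm, hxt⟩)
        · intro x hx hxt
          exact hle x ⟨hcmem.1.trans hx.1, hx.2⟩ (by
            simp only [Set.mem_insert_iff, not_or]
            exact ⟨(ne_of_lt hx.1).symm, hxt⟩)
      exact h2.trans h1
    · refine ih f f' a b hab hc ?_ ?_
      · intro x hx hxt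
        exact hd x hx (by
          simp only [Set.mem_insert_iff, not_or]
          exact ⟨fun h => hcmem (h ▸ hx), hxt⟩)
      · intro x hx hxt
        exact hle x hx (by
          simp only [Set.mem_insert_iff, not_or]
          exact ⟨fun h => hcmem (h ▸ hx), hxt⟩)

set_option maxHeartbeats 1000000 in
/-- `Rlow` solves the lower comparison ODE. -/
lemma rlow_deriv_aux18 (M₁ M₂ R₀ : ℝ) (hM₁ : 0 < M₁) (hM₂ : 0 < M₂) (hR₀ : 0 < R₀)
    (ε : ℝ) (hε : 0 ≤ ε) (h : 2 * ε * M₁ < 1) :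
    HasDerivAt (Rlow M₁ M₂ R₀)
      (-(4 * Mbar₁ M₁ ε * Rlow M₁ M₂ R₀ ε + 16 * Mbar₂ M₁ M₂ ε * Rlow M₁ M₂ R₀ ε ^ 2)) ε := by
  set c : ℝ := 8 * M₂ * R₀ / M₁ with hc
  have hc0 : 0 < c := by positivity
  have hu : 0 < 1 - 2 * M₁ * ε := by nlinarith
  have hg : 0 < 1 + c * Real.log (1 / (1 - 2 * M₁ * ε)) := by
    have hlog : 0 ≤ Real.log (1 / (1 - 2 * M₁ * ε)) := by
      apply Real.log_nonneg
      rw [le_div_iff₀ hu]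
      nlinarith
    nlinarith
  have h1 : HasDerivAt (fun t : ℝ => 1 - 2 * M₁ * t) (-(2 * M₁)) ε := by
    simpa using ((hasDerivAt_id ε).const_mul (2 * M₁)).const_sub (1:ℝ)
  have h2 : HasDerivAt (fun t : ℝ => R₀ * (1 - 2 * M₁ * t) ^ 2)
      (R₀ * (2 * (1 - 2 * M₁ * ε) * (-(2 * M₁)))) ε := by
    have := (h1.pow 2).const_mul R₀
    simpa [mul_comm, mul_assoc, mul_left_comm] using this
  have h3 : HasDerivAt (fun t : ℝ => Real.log (1 / (1 - 2 * M₁ * t)))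
      (2 * M₁ / (1 - 2 * M₁ * ε)) ε := by
    have := (h1.log hu.ne').neg
    have e : (fun t : ℝ => Real.log (1 / (1 - 2 * M₁ * t))) = -fun y => Real.log (1 - 2 * M₁ * y) := by
      funext t; simp [Real.log_inv]
    rw [e]; exact this.congr_deriv (by ring)
  have h4 : HasDerivAt (fun t : ℝ => 1 + c * Real.log (1 / (1 - 2 * M₁ * t)))
      (c * (2 * M₁ / (1 - 2 * M₁ * ε))) ε := ((h3.const_mul c).const_add 1)
  have h5 := h2.div h4 hg.ne'
  have heq : Rlow M₁ M₂ R₀ = fun t : ℝ =>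
      R₀ * (1 - 2 * M₁ * t) ^ 2 / (1 + c * Real.log (1 / (1 - 2 * M₁ * t))) := rfl
  rw [heq]
  refine h5.congr_deriv ?_
  simp only [Rlow, Mbar₁, Mbar₂]
  have he : (1 - 2 * ε * M₁) = (1 - 2 * M₁ * ε) := by ring
  rw [he]
  set L : ℝ := Real.log (1 / (1 - 2 * M₁ * ε))
  have hch : c * (2 * M₁ / (1 - 2 * M₁ * ε)) = 16 * M₂ * R₀ / (1 - 2 * M₁ * ε) := by
    rw [hc]; field_simp; ring
  rw [hch]
  have key : ∀ G : ℝ, G ≠ 0 →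
      -(4 * (M₁ / (1 - 2 * M₁ * ε)) * (R₀ * (1 - 2 * M₁ * ε) ^ 2 / G) +
        16 * (M₂ / (1 - 2 * M₁ * ε) ^ 3) * (R₀ * (1 - 2 * M₁ * ε) ^ 2 / G) ^ 2) =
      (R₀ * (2 * (1 - 2 * M₁ * ε) * -(2 * M₁)) * G -
        R₀ * (1 - 2 * M₁ * ε) ^ 2 * (16 * M₂ * R₀ / (1 - 2 * M₁ * ε))) / G ^ 2 := by
    intro G hG
    field_simp
    ring
  exact (key _ hg.ne').symm

/-- Grönwall-type comparison: a positive, continuous, piecewise-`C¹` function `R` with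
`R(0) = R₀` and `|R'| ≤ 4M̄₁R + 16M̄₂R²` satisfies `R(ε) ≥ R̄₋(ε)`; moreover `R̄₋` solves the
lower-comparison ODE `R̄₋' = −(4M̄₁R̄₋ + 16M̄₂R̄₋²)` with `R̄₋(0) = R₀`. -/
theorem stmt18 (M₁ M₂ R₀ εmax : ℝ) (hM₁ : 0 < M₁) (hM₂ : 0 < M₂) (hR₀ : 0 < R₀)
    (R R' : ℝ → ℝ) (S : Set ℝ) (hS : S.Finite)
    (hRcont : ContinuousOn R (Set.Ico 0 εmax))
    (hRpos : ∀ ε ∈ Set.Ico 0 εmax, 0 < R ε)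
    (hR0 : R 0 = R₀)
    (hderiv : ∀ ε ∈ Set.Ico 0 εmax, ε ∉ S → 2 * ε * M₁ < 1 → HasDerivAt R (R' ε) ε)
    (hbound : ∀ ε ∈ Set.Ico 0 εmax, ε ∉ S → 2 * ε * M₁ < 1 →
      |R' ε| ≤ 4 * Mbar₁ M₁ ε * R ε + 16 * Mbar₂ M₁ M₂ ε * R ε ^ 2) :
    (∀ ε ∈ Set.Ico 0 εmax, 2 * ε * M₁ < 1 → Rlow M₁ M₂ R₀ ε ≤ R ε) ∧
      ∀ ε : ℝ, 0 ≤ ε → 2 * ε * M₁ < 1 →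
        HasDerivAt (Rlow M₁ M₂ R₀)
          (-(4 * Mbar₁ M₁ ε * Rlow M₁ M₂ R₀ ε + 16 * Mbar₂ M₁ M₂ ε * Rlow M₁ M₂ R₀ ε ^ 2)) ε := by
  constructor
  · intro x hx hxM
    set c : ℝ := 8 * M₂ * R₀ / M₁ with hc
    have hc0 : 0 < c := by positivity
    have hux : 0 < 1 - 2 * M₁ * x := by nlinarith [hx.1]
    -- the comparison function
    set v : ℝ → ℝ := fun t =>
      (1 - 2 * M₁ * t) ^ 2 / R t - (1 + c * Real.log (1 / (1 - 2 * M₁ * t))) / R₀ with hv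
    set v' : ℝ → ℝ := fun t =>
      (2 * (1 - 2 * M₁ * t) * (-(2 * M₁)) * R t - (1 - 2 * M₁ * t) ^ 2 * R' t) / R t ^ 2
        - 16 * M₂ / (1 - 2 * M₁ * t) with hv'
    have hsub : Set.Icc 0 x ⊆ Set.Ico 0 εmax := fun t ht => ⟨ht.1, lt_of_le_of_lt ht.2 hx.2⟩
    have hupos : ∀ t ∈ Set.Icc (0:ℝ) x, 0 < 1 - 2 * M₁ * t := by
      intro t ht
      nlinarith [ht.1, ht.2]
    -- continuity of v on [0, x]
    have hcv : ContinuousOn v (Set.Icc 0 x) := by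
      apply ContinuousOn.sub
      · exact (((continuous_const.sub (continuous_const.mul continuous_id)).pow 2).continuousOn).div
          (hRcont.mono hsub) (fun t ht => (hRpos t (hsub ht)).ne')
      · apply ContinuousOn.div_const
        apply continuousOn_const.add (continuousOn_const.mul _)
        apply ContinuousOn.log
        · exact continuousOn_const.div
            ((continuous_const.sub (continuous_const.mul continuous_id)).continuousOn)
            (fun t ht => (hupos t ht).ne')
        · intro t ht
          exact (one_div_pos.mpr (hupos t ht)).ne'
    -- derivative of v off S
    have hdv : ∀ t ∈ Set.Ioo (0:ℝ) x, t ∉ S → HasDerivAt v (v' t) t := by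
      intro t ht hts
      have htI : t ∈ Set.Ico 0 εmax := ⟨ht.1.le, ht.2.trans hx.2⟩
      have htM : 2 * t * M₁ < 1 := by nlinarith [ht.2]
      have hut : 0 < 1 - 2 * M₁ * t := by nlinarith [ht.1]
      have hRt : 0 < R t := hRpos t htI
      have hdR : HasDerivAt R (R' t) t := hderiv t htI hts htM
      have hd1 : HasDerivAt (fun r : ℝ => 1 - 2 * M₁ * r) (-(2 * M₁)) t := by
        simpa using ((hasDerivAt_id t).const_mul (2 * M₁)).const_sub (1:ℝ)
      have hd2 : HasDerivAt (fun r : ℝ => (1 - 2 * M₁ * r) ^ 2)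
          (2 * (1 - 2 * M₁ * t) * (-(2 * M₁))) t := by
        exact (hd1.pow 2).congr_deriv (by norm_num)
      have hd3 := hd2.div hdR hRt.ne'
      have hd4 : HasDerivAt (fun r : ℝ => Real.log (1 / (1 - 2 * M₁ * r)))
          (2 * M₁ / (1 - 2 * M₁ * t)) t := by
        have := (hd1.log hut.ne').neg
        have e : (fun r : ℝ => Real.log (1 / (1 - 2 * M₁ * r))) = -fun y => Real.log (1 - 2 * M₁ * y) := by
          funext r; simp [Real.log_inv]
        rw [e]; exact this.congr_deriv (by ring)
      have hd5 : HasDerivAt (fun r : ℝ => (1 + c * Real.log (1 / (1 - 2 * M₁ * r))) / R₀)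
          (c * (2 * M₁ / (1 - 2 * M₁ * t)) / R₀) t :=
        ((hd4.const_mul c).const_add 1).div_const R₀
      have hcc : c * (2 * M₁ / (1 - 2 * M₁ * t)) / R₀ = 16 * M₂ / (1 - 2 * M₁ * t) := by
        rw [hc]; field_simp; ring
      rw [hcc] at hd5
      exact hd3.sub hd5
    -- nonpositivity of v'
    have hnp : ∀ t ∈ Set.Ioo (0:ℝ) x, t ∉ S → v' t ≤ 0 := by
      intro t ht hts
      have htI : t ∈ Set.Ico 0 εmax := ⟨ht.1.le, ht.2.trans hx.2⟩
      have htM : 2 * t * M₁ < 1 := by nlinarith [ht.2]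
      have hut : 0 < 1 - 2 * M₁ * t := by nlinarith [ht.1]
      have hRt : 0 < R t := hRpos t htI
      have hb := (abs_le.mp (hbound t htI hts htM)).1
      simp only [Mbar₁, Mbar₂] at hb
      have he : (1 - 2 * t * M₁) = (1 - 2 * M₁ * t) := by ring
      rw [he] at hb
      -- multiply hb by (1 - 2M₁t)^3 > 0
      have hb3 : -(R' t) * (1 - 2 * M₁ * t) ^ 3 ≤
          4 * M₁ * R t * (1 - 2 * M₁ * t) ^ 2 + 16 * M₂ * R t ^ 2 := by
        have h1 : -(R' t) ≤ 4 * (M₁ / (1 - 2 * M₁ * t)) * R t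
            + 16 * (M₂ / (1 - 2 * M₁ * t) ^ 3) * R t ^ 2 := by linarith
        have h2 := mul_le_mul_of_nonneg_right h1 (by positivity : (0:ℝ) ≤ (1 - 2 * M₁ * t) ^ 3)
        have h3 : (4 * (M₁ / (1 - 2 * M₁ * t)) * R t
            + 16 * (M₂ / (1 - 2 * M₁ * t) ^ 3) * R t ^ 2) * (1 - 2 * M₁ * t) ^ 3
            = 4 * M₁ * R t * (1 - 2 * M₁ * t) ^ 2 + 16 * M₂ * R t ^ 2 := by
          generalize 1 - 2 * M₁ * t = u at hut ⊢
          have hne := hut.ne'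
          field_simp
        linarith [h3 ▸ h2]
      -- conclude v' t ≤ 0
      show (2 * (1 - 2 * M₁ * t) * (-(2 * M₁)) * R t - (1 - 2 * M₁ * t) ^ 2 * R' t) / R t ^ 2
          - 16 * M₂ / (1 - 2 * M₁ * t) ≤ 0
      rw [sub_nonpos, div_le_div_iff₀ (by positivity) hut]
      nlinarith [hb3]
    -- apply the comparison lemma on [0, x]
    have hvx : v x ≤ v 0 :=
      le_start_of_deriv_nonpos_aux18 hS v v' 0 x hx.1 hcv hdv hnp
    have hv0 : v 0 = 0 := by
      simp [hv, hR0, Real.log_one]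
    have hkey : (1 - 2 * M₁ * x) ^ 2 / R x ≤
        (1 + c * Real.log (1 / (1 - 2 * M₁ * x))) / R₀ := by
      have : v x ≤ 0 := hv0 ▸ hvx
      simpa [hv, sub_nonpos] using this
    have hRx : 0 < R x := hRpos x hx
    have hgx : 0 < 1 + c * Real.log (1 / (1 - 2 * M₁ * x)) := by
      have hlog : 0 ≤ Real.log (1 / (1 - 2 * M₁ * x)) := by
        apply Real.log_nonneg
        rw [le_div_iff₀ hux]
        nlinarith [hx.1]
      nlinarith
    rw [div_le_div_iff₀ hRx hR₀] at hkey
    simp only [Rlow]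
    rw [div_le_iff₀ hgx]
    nlinarith [hkey]
  · intro ε hε h
    exact rlow_deriv_aux18 M₁ M₂ R₀ hM₁ hM₂ hR₀ ε hε h
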